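/- For each j ∈ {1, 3}, the quotient of the free associative k-algebra on generators x, y by the two-sided ideal generated by x^2, yx + ξ^j·xy, and y^4 has dimension 8 over k, with linear basis {x^m y^n : m ∈ {0,1}, 0 ≤ n ≤ 3}. (This algebra is the Nichols algebra B(V_{2,j}).) -/

import Mathlib

noncomputable section

/-- Generators of the Nichols algebra `B(V_{2,j})`. -/
inductive NGen : Type
  | x | y

variable (k : Type) [Field k] (ξ : k) (j : ℕ)

namespace NGen

/-- Shorthand for the generator `x` of the free algebra. -/
abbrev X : FreeAlgebra k NGen := FreeAlgebra.ι k NGen.x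
/-- Shorthand for the generator `y` of the free algebra. -/
abbrev Y : FreeAlgebra k NGen := FreeAlgebra.ι k NGen.y

end NGen

open NGen

/-- The defining relations of `B(V_{2,j})`: `x² = 0`, `yx + ξʲ·xy = 0`, `y⁴ = 0`. -/
inductive NRel : FreeAlgebra k NGen → FreeAlgebra k NGen → Prop
  | r1 : NRel (X k ^ 2) 0
  | r2 : NRel (Y k * X k + (ξ ^ j) • (X k * Y k)) 0
  | r3 : NRel (Y k ^ 4) 0

/-- The Nichols algebra `B(V_{2,j})` as an algebra. -/
abbrev NAlg : Type := RingQuot (NRel k ξ j)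

/-- The image of `x` in the quotient. -/
def xN : NAlg k ξ j := RingQuot.mkAlgHom k (NRel k ξ j) (X k)
/-- The image of `y` in the quotient. -/
def yN : NAlg k ξ j := RingQuot.mkAlgHom k (NRel k ξ j) (Y k)

/-! ### Auxiliary matrix model -/

open Matrix

abbrev NIdx : Type := Fin 2 × Fin 4

def XM : Matrix NIdx NIdx k :=
  Matrix.of fun i l => if i.1 = 1 ∧ l.1 = 0 ∧ i.2 = l.2 then 1 else 0

def YM (q : k) : Matrix NIdx NIdx k :=
  Matrix.of fun i l =>
    if i.1 = l.1 ∧ (i.2 : ℕ) = (l.2 : ℕ) + 1 then (if l.1 = 0 then 1 else -q) else 0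

variable {k}

lemma XM_sq : XM k * XM k = 0 := by
  ext i l
  rw [Matrix.mul_apply, Matrix.zero_apply]
  apply Finset.sum_eq_zero
  rintro ⟨a, b⟩ -
  fin_cases a <;> simp [XM, Matrix.of_apply]

lemma shift_mul {a b : ℕ} {A B : Matrix NIdx NIdx k}
    (hA : ∀ i l, A i l ≠ 0 → (l.2 : ℕ) + a ≤ (i.2 : ℕ))
    (hB : ∀ i l, B i l ≠ 0 → (l.2 : ℕ) + b ≤ (i.2 : ℕ)) :
    ∀ i l, (A * B) i l ≠ 0 → (l.2 : ℕ) + (a + b) ≤ (i.2 : ℕ) := by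
  intro i l h
  rw [Matrix.mul_apply] at h
  obtain ⟨m, -, hm⟩ := Finset.exists_ne_zero_of_sum_ne_zero h
  have h1 := hA i m (left_ne_zero_of_mul hm)
  have h2 := hB m l (right_ne_zero_of_mul hm)
  omega

lemma YM_shift (q : k) : ∀ i l, YM k q i l ≠ 0 → (l.2 : ℕ) + 1 ≤ (i.2 : ℕ) := by
  intro i l h
  rw [YM, Matrix.of_apply] at h
  by_contra hc
  apply h
  rw [if_neg]
  rintro ⟨-, h2⟩
  omega

lemma YM_pow4 (q : k) : YM k q ^ 4 = 0 := by
  have h1 := YM_shift q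
  have h4 := shift_mul (shift_mul (shift_mul h1 h1) h1) h1
  have e : YM k q ^ 4 = ((YM k q * YM k q) * YM k q) * YM k q := by
    rw [show YM k q ^ 4 = YM k q ^ 3 * YM k q from pow_succ _ 3,
      show YM k q ^ 3 = YM k q ^ 2 * YM k q from pow_succ _ 2,
      show YM k q ^ 2 = YM k q ^ 1 * YM k q from pow_succ _ 1, pow_one]
  rw [e]
  ext i l
  rw [Matrix.zero_apply]
  by_contra h
  have := h4 i l h
  have := i.2.isLt
  omega

lemma YX_apply (q : k) (i l : NIdx) :
    (YM k q * XM k) i l = YM k q i (1, l.2) * XM k (1, l.2) l := by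
  rw [Matrix.mul_apply]
  apply Finset.sum_eq_single
  · intro m _ hm
    have hz : XM k m l = 0 := by
      rw [XM, Matrix.of_apply, if_neg]
      rintro ⟨h1, -, h2⟩
      exact hm (Prod.ext h1 h2)
    rw [hz, mul_zero]
  · intro hmem
    exact absurd (Finset.mem_univ _) hmem

lemma XY_apply (q : k) (i l : NIdx) :
    (XM k * YM k q) i l = XM k i (0, i.2) * YM k q (0, i.2) l := by
  rw [Matrix.mul_apply]
  apply Finset.sum_eq_single
  · intro m _ hm
    have hz : XM k i m = 0 := by
      rw [XM, Matrix.of_apply, if_neg]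
      rintro ⟨-, h1, h2⟩
      exact hm (Prod.ext h1 h2.symm)
    rw [hz, zero_mul]
  · intro hmem
    exact absurd (Finset.mem_univ _) hmem

lemma YX_comm (q : k) : YM k q * XM k + q • (XM k * YM k q) = 0 := by
  ext ⟨a, b⟩ ⟨c, d⟩
  rw [Matrix.add_apply, Matrix.smul_apply, YX_apply, XY_apply, Matrix.zero_apply]
  by_cases ha : a = 1 <;> by_cases hc : c = 0 <;>
    by_cases hbd : (b : ℕ) = (d : ℕ) + 1 <;>
    simp [XM, YM, Matrix.of_apply, ha, hc, hbd, smul_eq_mul]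
  exact fun h => absurd h.symm hc

def φAux (q : k) : FreeAlgebra k NGen →ₐ[k] Matrix NIdx NIdx k :=
  FreeAlgebra.lift k (fun g => match g with | NGen.x => XM k | NGen.y => YM k q)

@[simp] lemma φAux_x (q : k) : φAux q (X k) = XM k := by
  rw [φAux, FreeAlgebra.lift_ι_apply]

@[simp] lemma φAux_y (q : k) : φAux q (Y k) = YM k q := by
  rw [φAux, FreeAlgebra.lift_ι_apply]

lemma φAux_rel :
    ∀ ⦃a b : FreeAlgebra k NGen⦄, NRel k ξ j a b → φAux (ξ ^ j) a = φAux (ξ ^ j) b := by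
  intro a b h
  cases h with
  | r1 =>
    rw [map_pow, map_zero, φAux_x, pow_two, XM_sq]
  | r2 =>
    rw [map_add, map_mul (φAux (ξ ^ j)), _root_.map_smul, map_mul (φAux (ξ ^ j)), map_zero,
      φAux_x, φAux_y]
    exact YX_comm (ξ ^ j)
  | r3 =>
    rw [map_pow, map_zero, φAux_y, YM_pow4]

def ΦN : NAlg k ξ j →ₐ[k] Matrix NIdx NIdx k :=
  RingQuot.liftAlgHom k ⟨φAux (ξ ^ j), φAux_rel ξ j⟩

lemma ΦN_x : ΦN ξ j (xN k ξ j) = XM k := by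
  rw [ΦN, xN, RingQuot.liftAlgHom_mkAlgHom_apply, φAux_x]

lemma ΦN_y : ΦN ξ j (yN k ξ j) = YM k (ξ ^ j) := by
  rw [ΦN, yN, RingQuot.liftAlgHom_mkAlgHom_apply, φAux_y]

def ℓN : NAlg k ξ j →ₗ[k] (NIdx → k) where
  toFun a := (ΦN ξ j a) *ᵥ Pi.single ((0 : Fin 2), (0 : Fin 4)) 1
  map_add' a b := by simp only [map_add, Matrix.add_mulVec]
  map_smul' c a := by
    simp only [_root_.map_smul, Matrix.smul_mulVec, RingHom.id_apply]

lemma colX (n : Fin 4) :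
    XM k *ᵥ Pi.single ((0 : Fin 2), n) (1 : k) = Pi.single ((1 : Fin 2), n) 1 := by
  ext ⟨a, b⟩
  by_cases ha : a = 1 <;> by_cases hb : b = n <;>
    simp [Matrix.mulVec_single, XM, Matrix.of_apply, Pi.single_apply, Prod.ext_iff, ha, hb]

lemma colY (q : k) (n m : Fin 4) (h : (n : ℕ) + 1 = (m : ℕ)) :
    YM k q *ᵥ Pi.single ((0 : Fin 2), n) (1 : k) = Pi.single ((0 : Fin 2), m) 1 := by
  have hnm : ∀ b : Fin 4, ((b : ℕ) = (n : ℕ) + 1) = (b = m) := by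
    intro b
    rw [h, eq_iff_iff, Fin.ext_iff]
  ext ⟨a, b⟩
  by_cases ha : a = 0 <;> by_cases hb : b = m <;>
    simp [Matrix.mulVec_single, YM, Matrix.of_apply, Pi.single_apply, Prod.ext_iff,
      ha, hb, hnm]

lemma hyt (q : k) : ∀ (t : ℕ) (ht : t < 4),
    YM k q ^ t *ᵥ Pi.single ((0 : Fin 2), (0 : Fin 4)) (1 : k)
      = Pi.single ((0 : Fin 2), (⟨t, ht⟩ : Fin 4)) 1
  | 0, _ => by rw [pow_zero, Matrix.one_mulVec]; rfl
  | (s + 1), ht => by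
    rw [pow_succ' (YM k q) s, ← Matrix.mulVec_mulVec, hyt q s (by omega)]
    exact colY q ⟨s, by omega⟩ ⟨s + 1, ht⟩ rfl

lemma ellN_apply (m : Fin 2) (n : Fin 4) :
    ℓN ξ j (xN k ξ j ^ (m : ℕ) * yN k ξ j ^ (n : ℕ)) = Pi.single (m, n) 1 := by
  show (ΦN ξ j _) *ᵥ _ = _
  rw [map_mul (ΦN ξ j), map_pow, map_pow, ΦN_x, ΦN_y, ← Matrix.mulVec_mulVec]
  have hy := hyt (ξ ^ j) (n : ℕ) n.isLt
  rw [Fin.eta] at hy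
  rw [hy]
  obtain ⟨mv, hm⟩ := m
  interval_cases mv
  · rw [pow_zero, Matrix.one_mulVec]; rfl
  · rw [pow_one]
    exact colX n

/-! ### Relations in the quotient -/

lemma rel_x2 : xN k ξ j ^ 2 = 0 := by
  rw [xN, ← map_pow, RingQuot.mkAlgHom_rel k (NRel.r1 (k := k) (ξ := ξ) (j := j)), map_zero]

lemma rel_y4 : yN k ξ j ^ 4 = 0 := by
  rw [yN, ← map_pow, RingQuot.mkAlgHom_rel k (NRel.r3 (k := k) (ξ := ξ) (j := j)), map_zero]

lemma rel_yx0 : yN k ξ j * xN k ξ j + (ξ ^ j) • (xN k ξ j * yN k ξ j) = 0 := by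
  have h := RingQuot.mkAlgHom_rel k (NRel.r2 (k := k) (ξ := ξ) (j := j))
  rw [map_add, _root_.map_mul, _root_.map_smul, _root_.map_mul, map_zero] at h
  rw [xN, yN]
  exact h

/-! ### The basis family -/

def vB : NIdx → NAlg k ξ j := fun p => xN k ξ j ^ (p.1 : ℕ) * yN k ξ j ^ (p.2 : ℕ)

lemma vB_li : LinearIndependent k (vB ξ j) := by
  have h1 : LinearIndependent k (fun p : NIdx => (Pi.single p 1 : NIdx → k)) := by
    have h := (Pi.basisFun k NIdx).linearIndependent
    rwa [show ⇑(Pi.basisFun k NIdx) = fun p : NIdx => (Pi.single p 1 : NIdx → k) from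
      funext fun p => Pi.basisFun_apply k NIdx p] at h
  apply LinearIndependent.of_comp (ℓN ξ j)
  have he : ⇑(ℓN ξ j) ∘ vB ξ j = fun p : NIdx => (Pi.single p 1 : NIdx → k) :=
    funext fun p => ellN_apply ξ j p.1 p.2
  rwa [he]

lemma y_mul (m : Fin 2) (t : ℕ) :
    yN k ξ j * (xN k ξ j ^ (m : ℕ) * yN k ξ j ^ t)
      = (if (m : ℕ) = 0 then (1 : k) else -(ξ ^ j)) •
          (xN k ξ j ^ (m : ℕ) * yN k ξ j ^ (t + 1)) := by
  obtain ⟨mv, hm⟩ := m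
  interval_cases mv
  · simp [pow_zero, one_mul, one_smul, (pow_succ' (yN k ξ j) t).symm]
  · simp only [pow_one, if_neg (one_ne_zero)]
    have h1 : yN k ξ j * (xN k ξ j * yN k ξ j ^ t)
        + (ξ ^ j) • (xN k ξ j * yN k ξ j ^ (t + 1)) = 0 := by
      have e : yN k ξ j * (xN k ξ j * yN k ξ j ^ t)
          + (ξ ^ j) • (xN k ξ j * yN k ξ j ^ (t + 1))
          = (yN k ξ j * xN k ξ j + (ξ ^ j) • (xN k ξ j * yN k ξ j)) * yN k ξ j ^ t := by
        rw [add_mul, _root_.smul_mul_assoc, _root_.mul_assoc, _root_.mul_assoc,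
          ← pow_succ' (yN k ξ j) t]
      rw [e, rel_yx0, zero_mul]
    have e2 : yN k ξ j * (xN k ξ j * yN k ξ j ^ t)
        = yN k ξ j * (xN k ξ j * yN k ξ j ^ t)
          + ((ξ ^ j) • (xN k ξ j * yN k ξ j ^ (t + 1))
            + (-(ξ ^ j)) • (xN k ξ j * yN k ξ j ^ (t + 1))) := by
      rw [← add_smul, add_neg_cancel, zero_smul, add_zero]
    rw [e2, ← add_assoc, h1, zero_add]

lemma vB_span : ⊤ ≤ Submodule.span k (Set.range (vB ξ j)) := by
  set W := Submodule.span k (Set.range (vB ξ j)) with hWdef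
  have hmem : ∀ p, vB ξ j p ∈ W := fun p => Submodule.subset_span ⟨p, rfl⟩
  have hone : (1 : NAlg k ξ j) ∈ W := by
    have h := hmem (0, 0)
    simpa [vB] using h
  have hxgen : ∀ p : NIdx, xN k ξ j * vB ξ j p ∈ W := by
    rintro ⟨m, n⟩
    obtain ⟨mv, hm⟩ := m
    interval_cases mv
    · have h : xN k ξ j * vB ξ j (⟨0, hm⟩, n) = vB ξ j (1, n) := by
        simp [vB, pow_one]
      rw [h]; exact hmem _
    · have h : xN k ξ j * vB ξ j (⟨1, hm⟩, n) = 0 := by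
        show xN k ξ j * (xN k ξ j ^ 1 * yN k ξ j ^ (n : ℕ)) = 0
        rw [pow_one, ← mul_assoc, ← pow_two, rel_x2, zero_mul]
      rw [h]; exact zero_mem _
  have hygen : ∀ p : NIdx, yN k ξ j * vB ξ j p ∈ W := by
    rintro ⟨m, n⟩
    by_cases hn : (n : ℕ) < 3
    · have h : yN k ξ j * vB ξ j (m, n)
          = (if (m : ℕ) = 0 then (1 : k) else -(ξ ^ j)) •
              vB ξ j (m, ⟨(n : ℕ) + 1, by omega⟩) := y_mul ξ j m (n : ℕ)
      rw [h]
      exact Submodule.smul_mem _ _ (hmem _)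
    · have hn3 : (n : ℕ) + 1 = 4 := by have := n.isLt; omega
      have h : yN k ξ j * vB ξ j (m, n) = 0 := by
        rw [show yN k ξ j * vB ξ j (m, n)
            = (if (m : ℕ) = 0 then (1 : k) else -(ξ ^ j)) •
                (xN k ξ j ^ (m : ℕ) * yN k ξ j ^ ((n : ℕ) + 1)) from y_mul ξ j m (n : ℕ),
          hn3, rel_y4, mul_zero, smul_zero]
      rw [h]; exact zero_mem _
  have hxW : ∀ w ∈ W, xN k ξ j * w ∈ W := by
    have hle : W ≤ Submodule.comap (LinearMap.mulLeft k (xN k ξ j)) W :=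
      Submodule.span_le.mpr (by rintro _ ⟨p, rfl⟩; exact hxgen p)
    exact fun w hw => hle hw
  have hyW : ∀ w ∈ W, yN k ξ j * w ∈ W := by
    have hle : W ≤ Submodule.comap (LinearMap.mulLeft k (yN k ξ j)) W :=
      Submodule.span_le.mpr (by rintro _ ⟨p, rfl⟩; exact hygen p)
    exact fun w hw => hle hw
  have hstep : ∀ f : FreeAlgebra k NGen, ∀ w ∈ W,
      RingQuot.mkAlgHom k (NRel k ξ j) f * w ∈ W := by
    intro f
    induction f using FreeAlgebra.induction with
    | grade0 r =>
      intro w hw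
      rw [AlgHom.commutes, ← Algebra.smul_def]
      exact Submodule.smul_mem _ _ hw
    | grade1 g =>
      intro w hw
      cases g
      · exact hxW w hw
      · exact hyW w hw
    | mul a b ha hb =>
      intro w hw
      rw [_root_.map_mul, mul_assoc]
      exact ha _ (hb w hw)
    | add a b ha hb =>
      intro w hw
      rw [map_add, add_mul]
      exact add_mem (ha w hw) (hb w hw)
  intro a _
  obtain ⟨f, rfl⟩ := RingQuot.mkAlgHom_surjective k (NRel k ξ j) a
  simpa using hstep f 1 hone

/-! ### Main theorem -/

/-- For `j ∈ {1,3}`, the quotient of the free algebra on `x, y` by the relations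
`x² = 0`, `yx + ξʲ·xy = 0`, `y⁴ = 0` is 8-dimensional, with linear basis
`{xᵐ yⁿ : m ∈ {0,1}, 0 ≤ n ≤ 3}`. -/
theorem stmt_11 (k : Type) [Field k] [IsAlgClosed k] [CharZero k] (ξ : k)
    (hξ : IsPrimitiveRoot ξ 4) (j : ℕ) (hj : j = 1 ∨ j = 3) :
    Module.finrank k (NAlg k ξ j) = 8 ∧
    ∃ B : Module.Basis (Fin 2 × Fin 4) k (NAlg k ξ j),
      ∀ (m : Fin 2) (n : Fin 4), B (m, n) = xN k ξ j ^ (m : ℕ) * yN k ξ j ^ (n : ℕ) := by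
  have li := vB_li ξ j
  let B : Module.Basis NIdx k (NAlg k ξ j) := Module.Basis.mk li (vB_span ξ j)
  constructor
  · rw [Module.finrank_eq_card_basis B]
    simp
  · exact ⟨B, fun m n => Module.Basis.mk_apply li (vB_span ξ j) (m, n)⟩

end
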